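/- If H ≤ ℝ₊ˣ acts nontrivially on a tracial connected fair and balanced δ-graph Γ (with w_V(h·v) = h·w_V(v)) such that some vertex x has two distinct H-translates y₂ = h·y₁ both adjacent to x, then the quotient graph Γ^H is not tracial: it has two edges from [x] to [y₁] with distinct weights w_V(y₁)/w_V(x) and h·w_V(y₁)/w_V(x). -/

import Mathlib

/-- A fair and balanced `δ`-graph: a locally finite directed multigraph with positive
edge weights, an involution on edges reversing source and target with
`w e * w (bar e) = 1`, and outgoing weight sum `δ` at every vertex. -/
structure FBGraph (δ : ℝ) where
  V : Type
  E : Type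
  s : E → V
  t : E → V
  w : E → ℝ
  w_pos : ∀ e, 0 < w e
  bar : E → E
  bar_bar : ∀ e, bar (bar e) = e
  s_bar : ∀ e, s (bar e) = t e
  t_bar : ∀ e, t (bar e) = s e
  w_bar : ∀ e, w e * w (bar e) = 1
  out_finite : ∀ x : V, {e : E | s e = x}.Finite
  sum_w : ∀ x : V, ∑ e ∈ (out_finite x).toFinset, w e = δ

/-- Paths in a directed graph given by source and target maps. -/
inductive IsPathOn {V E : Type} (s t : E → V) : V → V → List E → Prop
  | nil (v : V) : IsPathOn s t v v []
  | cons {a c : V} {e : E} {l : List E} :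
      s e = a → IsPathOn s t (t e) c l → IsPathOn s t a c (e :: l)

/-- The weight of a path: the product of its edge weights. -/
def pathWeight {E : Type} (w : E → ℝ) (l : List E) : ℝ := (l.map w).prod

theorem pathWeight_append {E : Type} (w : E → ℝ) (l₁ l₂ : List E) :
    pathWeight w (l₁ ++ l₂) = pathWeight w l₁ * pathWeight w l₂ := by
  simp [pathWeight]

theorem IsPathOn.append {V E : Type} {s t : E → V} {a b c : V} {l₁ l₂ : List E}
    (h₁ : IsPathOn s t a b l₁) (h₂ : IsPathOn s t b c l₂) :
    IsPathOn s t a c (l₁ ++ l₂) := by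
  induction h₁ with
  | nil v => simpa using h₂
  | cons hs _ ih => exact IsPathOn.cons hs (ih h₂)

theorem IsPathOn.single {V E : Type} {s t : E → V} (e : E) :
    IsPathOn s t (s e) (t e) [e] := IsPathOn.cons rfl (IsPathOn.nil _)

/-- The set of weights of loops based at `x`. -/
def loopWeights {δ : ℝ} (G : FBGraph δ) (x : G.V) : Set ℝ :=
  {r | ∃ l : List G.E, IsPathOn G.s G.t x x l ∧ pathWeight G.w l = r}

/-- Vertices of the tracial cover `Γ_tr`: pairs `[λ, v]` such that there is a path
from `x` to `v` of weight `λ`. -/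
abbrev TrV {δ : ℝ} (G : FBGraph δ) (x : G.V) : Type :=
  {p : ℝ × G.V // ∃ l : List G.E, IsPathOn G.s G.t x p.2 l ∧ pathWeight G.w l = p.1}

/-- Edges of the tracial cover: an edge out of `[λ, v]` for each edge `e` of `Γ`
with source `v`. -/
abbrev TrE {δ : ℝ} (G : FBGraph δ) (x : G.V) : Type :=
  {p : (ℝ × G.V) × G.E //
    (∃ l : List G.E, IsPathOn G.s G.t x p.1.2 l ∧ pathWeight G.w l = p.1.1) ∧
      G.s p.2 = p.1.2}

def trS {δ : ℝ} (G : FBGraph δ) (x : G.V) (e : TrE G x) : TrV G x := ⟨e.val.1, e.prop.1⟩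

def trW {δ : ℝ} (G : FBGraph δ) (x : G.V) (e : TrE G x) : ℝ := G.w e.val.2

def trT {δ : ℝ} (G : FBGraph δ) (x : G.V) (e : TrE G x) : TrV G x :=
  ⟨(e.val.1.1 * G.w e.val.2, G.t e.val.2), by
    obtain ⟨⟨l, hl, hw⟩, hs⟩ := e.prop
    refine ⟨l ++ [e.val.2], ?_, ?_⟩
    · exact hl.append (hs ▸ IsPathOn.single e.val.2)
    · rw [pathWeight_append, hw]; simp [pathWeight]⟩

/-- The distinguished vertex `[1, x]` of the tracial cover. -/
def trBase {δ : ℝ} (G : FBGraph δ) (x : G.V) : TrV G x :=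
  ⟨(1, x), ⟨[], IsPathOn.nil x, by simp [pathWeight]⟩⟩

/-- If `H ≤ ℝ₊ˣ` acts nontrivially on a tracial connected fair and balanced
`δ`-graph `Γ` (with `wV (h · v) = h * wV v`) and some vertex `x₀` has two distinct
`H`-translates `y₂ = h · y₁` both adjacent to it, then any quotient graph `Γ^H` is
not tracial: it has two edges from `[x₀]` to `[y₁]` with the distinct weights
`wV y₁ / wV x₀` and `h * wV y₁ / wV x₀`, and hence a loop based at `[x₀]` of weight
different from `1`. -/
theorem quotient_graph_not_tracial {δ : ℝ} (G : FBGraph δ) (x : G.V)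
    (wV : G.V → ℝ) (hwpos : ∀ v, 0 < wV v) (hwx : wV x = 1)
    (hwV : ∀ e : G.E, G.w e = wV (G.t e) / wV (G.s e))
    (hconn : ∀ v : G.V, ∃ l : List G.E, IsPathOn G.s G.t x v l)
    (H : Subgroup ℝˣ) (hHpos : ∀ h : H, (0 : ℝ) < ((h : ℝˣ) : ℝ))
    (act : H → G.V → G.V) (actE : H → G.E → G.E)
    (act_one : ∀ v, act 1 v = v)
    (act_mul : ∀ h₁ h₂ v, act (h₁ * h₂) v = act h₁ (act h₂ v))
    (actE_one : ∀ e, actE 1 e = e)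
    (actE_mul : ∀ h₁ h₂ e, actE (h₁ * h₂) e = actE h₁ (actE h₂ e))
    (act_s : ∀ h e, G.s (actE h e) = act h (G.s e))
    (act_t : ∀ h e, G.t (actE h e) = act h (G.t e))
    (act_w : ∀ h e, G.w (actE h e) = G.w e)
    (act_bar : ∀ h e, G.bar (actE h e) = actE h (G.bar e))
    (act_wV : ∀ h v, wV (act h v) = ((h : ℝˣ) : ℝ) * wV v)
    -- the nontrivial adjacency data:
    (x₀ : G.V) (e₁ e₂ : G.E) (h : H) (hne : h ≠ 1)
    (hs₁ : G.s e₁ = x₀) (hs₂ : G.s e₂ = x₀)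
    (ht₂ : G.t e₂ = act h (G.t e₁)) :
    ∀ (Q : FBGraph δ) (πV : G.V → Q.V) (πE : G.E → Q.E),
      Function.Surjective πV → Function.Surjective πE →
      (∀ e, Q.s (πE e) = πV (G.s e)) →
      (∀ e, Q.t (πE e) = πV (G.t e)) →
      (∀ e, Q.w (πE e) = G.w e) →
      (∀ v v', πV v = πV v' ↔ ∃ h' : H, act h' v = v') →
      (∀ e e', πE e = πE e' ↔ ∃ h' : H, actE h' e = e') →
      (∃ E₁ E₂ : Q.E,
        Q.s E₁ = πV x₀ ∧ Q.s E₂ = πV x₀ ∧ Q.t E₁ = Q.t E₂ ∧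
        Q.w E₁ = wV (G.t e₁) / wV x₀ ∧
        Q.w E₂ = ((h : ℝˣ) : ℝ) * wV (G.t e₁) / wV x₀ ∧
        Q.w E₁ ≠ Q.w E₂) ∧
      (∃ l : List Q.E, IsPathOn Q.s Q.t (πV x₀) (πV x₀) l ∧
        pathWeight Q.w l ≠ 1) := by
  intro Q πV πE _ _ hQs hQt hQw hπV hπE
  have hval : ((h : ℝˣ) : ℝ) ≠ 1 := by
    intro h1
    apply hne
    ext
    exact h1
  have hpos : (0 : ℝ) < ((h : ℝˣ) : ℝ) := hHpos h
  have hwx0 : 0 < wV x₀ := hwpos x₀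
  have hwt : 0 < wV (G.t e₁) := hwpos (G.t e₁)
  have hw1 : Q.w (πE e₁) = wV (G.t e₁) / wV x₀ := by
    rw [hQw, hwV, hs₁]
  have hw2 : Q.w (πE e₂) = ((h : ℝˣ) : ℝ) * wV (G.t e₁) / wV x₀ := by
    rw [hQw, hwV, hs₂, ht₂, act_wV]
  have htt : Q.t (πE e₁) = Q.t (πE e₂) := by
    rw [hQt, hQt, ht₂]
    exact (hπV _ _).2 ⟨h, rfl⟩
  have hwne : Q.w (πE e₁) ≠ Q.w (πE e₂) := by
    rw [hw1, hw2]
    intro heq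
    field_simp at heq
    exact hval heq.symm
  refine ⟨⟨πE e₁, πE e₂, by rw [hQs, hs₁], by rw [hQs, hs₂], htt, hw1, hw2, hwne⟩, ?_⟩
  refine ⟨[πE e₁, Q.bar (πE e₂)], ?_, ?_⟩
  · refine IsPathOn.cons (by rw [hQs, hs₁]) ?_
    refine IsPathOn.cons (by rw [Q.s_bar, htt]) ?_
    rw [Q.t_bar, hQs, hs₂]
    exact IsPathOn.nil _
  · have hbar := Q.w_bar (πE e₂)
    have hw2pos : 0 < Q.w (πE e₂) := Q.w_pos _
    simp only [pathWeight, List.map, List.prod_cons, List.prod_nil, mul_one]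
    intro heq
    have hb : Q.w (Q.bar (πE e₂)) = 1 / Q.w (πE e₂) := by
      field_simp
      linarith [hbar]
    rw [hb] at heq
    field_simp at heq
    exact hwne heq
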